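/- arXiv:1502.05313 — 3 statements merged into one kernel-verified Lean document; each statement's English description precedes it below -/
import Mathlib

section
/- Let V be a finite nonempty type, let p* : ℝ → V → ℝ be a family of unnormalized probabilities such that p*(β, v) > 0 for all β ∈ [0,1] and v ∈ V, and such that for each v the map β ↦ log p*(β, v) is twice continuously differentiable on [0,1]. Let β : [0,1] → [0,1] be a twice continuously differentiable function. For each K ∈ ℕ set β_k = β(k/K) for k = 0, …, K. Then, as K → ∞, the scaled sum K · Σ_{k=0}^{K−1} Var_{μ_{β_k}}[ v ↦ log p*(β_{k+1}, v) − log p*(β_k, v) ] converges to the integral J(β) = ∫₀¹ β′(t)² · g(β(t)) dt, where β′ denotes the derivative of β. (This is the paper's Theorem 1: under perfect transitions the scaled variance of the log AIS weight converges to the functional J.) -/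
open Filter Topology

/-- Partition function `Z(β) = ∑ v, p*(β, v)` of a family of unnormalized
probabilities over a finite type. -/
noncomputable def Zf {V : Type*} [Fintype V] (pstar : ℝ → V → ℝ) (β : ℝ) : ℝ :=
  ∑ v, pstar β v

/-- Intermediate distribution `μ_β(v) = p*(β, v) / Z(β)`. -/
noncomputable def aisDist {V : Type*} [Fintype V] (pstar : ℝ → V → ℝ) (β : ℝ) (v : V) : ℝ :=
  pstar β v / Zf pstar β

/-- Variance of `f : V → ℝ` under a probability mass function `μ` on a finite type. -/
noncomputable def pmfVar {V : Type*} [Fintype V] (μ : V → ℝ) (f : V → ℝ) : ℝ :=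
  ∑ v, μ v * (f v - ∑ w, μ w * f w) ^ 2

/-- `g(β) = Var_{μ_β}[ v ↦ ∂/∂β log p*(β, v) ]`, with the derivative taken
within `[0,1]` since `p*` is only assumed smooth there. -/
noncomputable def gfun {V : Type*} [Fintype V] (pstar : ℝ → V → ℝ) (β : ℝ) : ℝ :=
  pmfVar (aisDist pstar β)
    (fun v => derivWithin (fun b => Real.log (pstar b v)) (Set.Icc 0 1) β)


lemma clamp_mem (x : ℝ) : max 0 (min 1 x) ∈ Set.Icc (0:ℝ) 1 :=
  ⟨le_max_left _ _, max_le (by norm_num) (min_le_left _ _)⟩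

lemma clamp_of_mem {x : ℝ} (hx : x ∈ Set.Icc (0:ℝ) 1) : max 0 (min 1 x) = x := by
  rw [min_eq_right hx.2, max_eq_right hx.1]

lemma continuous_clamp : Continuous fun x : ℝ => max 0 (min 1 x) :=
  continuous_const.max (continuous_const.min continuous_id)

noncomputable def dext (f : ℝ → ℝ) (x : ℝ) : ℝ :=
  derivWithin f (Set.Icc 0 1) (max 0 (min 1 x))

noncomputable def hquot (f : ℝ → ℝ) (a b : ℝ) : ℝ :=
  ∫ s in (0:ℝ)..1, dext f (a + s * (b - a))

lemma dext_continuous {f : ℝ → ℝ} (hf : ContDiffOn ℝ 2 f (Set.Icc 0 1)) :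
    Continuous (dext f) := by
  have h1 : ContinuousOn (derivWithin f (Set.Icc 0 1)) (Set.Icc 0 1) :=
    hf.continuousOn_derivWithin (uniqueDiffOn_Icc zero_lt_one) (by norm_num)
  exact h1.comp_continuous continuous_clamp (fun x => clamp_mem x)

lemma hquot_continuous {f : ℝ → ℝ} (hf : ContDiffOn ℝ 2 f (Set.Icc 0 1)) :
    Continuous fun p : ℝ × ℝ => hquot f p.1 p.2 := by
  apply intervalIntegral.continuous_parametric_intervalIntegral_of_continuous'
  exact (dext_continuous hf).comp (by fun_prop)

lemma hquot_self (f : ℝ → ℝ) {a : ℝ} (ha : a ∈ Set.Icc (0:ℝ) 1) :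
    hquot f a a = derivWithin f (Set.Icc 0 1) a := by
  have h : (fun s : ℝ => dext f (a + s * (a - a))) = fun _ => derivWithin f (Set.Icc 0 1) a := by
    funext s
    simp [dext, clamp_of_mem ha]
  rw [hquot, h, intervalIntegral.integral_const]
  simp

lemma sub_eq_hquot {f : ℝ → ℝ} (hf : ContDiffOn ℝ 2 f (Set.Icc 0 1)) {a b : ℝ}
    (ha : a ∈ Set.Icc (0:ℝ) 1) (hb : b ∈ Set.Icc (0:ℝ) 1) :
    f b - f a = (b - a) * hquot f a b := by
  have hcont := dext_continuous hf
  have ftc : ∀ c d : ℝ, c ∈ Set.Icc (0:ℝ) 1 → d ∈ Set.Icc (0:ℝ) 1 → c ≤ d →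
      ∫ x in c..d, dext f x = f d - f c := by
    intro c d hc hd hcd
    apply intervalIntegral.integral_eq_sub_of_hasDeriv_right_of_le hcd
    · exact hf.continuousOn.mono (Set.Icc_subset_Icc hc.1 hd.2)
    · intro x hx
      have hx01 : x ∈ Set.Ioo (0:ℝ) 1 := ⟨lt_of_le_of_lt hc.1 hx.1, lt_of_lt_of_le hx.2 hd.2⟩
      have hxI : x ∈ Set.Icc (0:ℝ) 1 := ⟨hx01.1.le, hx01.2.le⟩
      have hd1 : HasDerivWithinAt f (derivWithin f (Set.Icc 0 1) x) (Set.Icc 0 1) x :=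
        ((hf.differentiableOn (by norm_num)) x hxI).hasDerivWithinAt
      have hda : HasDerivAt f (derivWithin f (Set.Icc 0 1) x) x :=
        hd1.hasDerivAt (Icc_mem_nhds hx01.1 hx01.2)
      have hdx : dext f x = derivWithin f (Set.Icc 0 1) x := by
        rw [dext, clamp_of_mem hxI]
      rw [hdx]
      exact hda.hasDerivWithinAt
    · exact hcont.intervalIntegrable _ _
  have key : ∫ x in a..b, dext f x = f b - f a := by
    rcases le_total a b with hab | hba
    · exact ftc a b ha hb hab
    · rw [intervalIntegral.integral_symm, ftc b a hb ha hba]; ring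
  by_cases hba : b = a
  · subst hba; simp
  · have hc : b - a ≠ 0 := sub_ne_zero.mpr hba
    have h1 : hquot f a b = (b - a)⁻¹ * ∫ x in a..b, dext f x := by
      rw [hquot]
      have h2 : (fun s : ℝ => dext f (a + s * (b - a))) = fun s => dext f ((b - a) * s + a) := by
        funext s; congr 1; ring
      rw [h2, intervalIntegral.integral_comp_mul_add (dext f) hc a]
      have e1 : (b - a) * 0 + a = a := by ring
      have e2 : (b - a) * 1 + a = b := by ring
      rw [e1, e2, smul_eq_mul]
    rw [h1, key]
    field_simp


lemma tendsto_riemann_diag (Θ : ℝ → ℝ → ℝ) (hΘ : Continuous fun p : ℝ × ℝ => Θ p.1 p.2) :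
    Tendsto (fun K : ℕ => ∑ k ∈ Finset.range K, (1 / (K:ℝ)) * Θ ((k:ℝ)/K) (((k:ℝ)+1)/K)) atTop
      (𝓝 (∫ t in (0:ℝ)..1, Θ t t)) := by
  have hH : Continuous fun t : ℝ => Θ t t := hΘ.comp (continuous_id.prodMk continuous_id)
  have hUC := ((isCompact_Icc (a := (0:ℝ)) (b := 1)).prod
      (isCompact_Icc (a := (0:ℝ)) (b := 1))).uniformContinuousOn_of_continuous hΘ.continuousOn
  rw [Metric.tendsto_atTop]
  intro ε hε
  obtain ⟨δ, hδ, hmod⟩ := Metric.uniformContinuousOn_iff.1 hUC (ε/2) (by linarith)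
  obtain ⟨N, hN⟩ := exists_nat_gt (1/δ)
  refine ⟨N + 1, fun K hK => ?_⟩
  have hK1 : 1 ≤ K := le_trans (Nat.le_add_left 1 N) hK
  have hKpos : (0:ℝ) < K := by exact_mod_cast hK1
  have hKδ : 1 / (K:ℝ) < δ := by
    have h1 : (N:ℝ) < K := by exact_mod_cast Nat.lt_of_lt_of_le (Nat.lt_succ_self N) hK
    have h2 : 1/δ < (K:ℝ) := lt_of_lt_of_le hN h1.le
    rw [div_lt_iff₀ hKpos]
    rw [div_lt_iff₀ hδ] at h2
    linarith
  set a : ℕ → ℝ := fun k => (k:ℝ) / K with ha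
  have hamem : ∀ k : ℕ, k ≤ K → a k ∈ Set.Icc (0:ℝ) 1 := by
    intro k hk
    refine ⟨by positivity, ?_⟩
    rw [div_le_one hKpos]
    exact_mod_cast hk
  have hmono : ∀ k : ℕ, a k ≤ a (k+1) := by
    intro k
    simp only [ha]
    push_cast
    gcongr
    linarith
  have hlen : ∀ k : ℕ, a (k+1) - a k = 1/(K:ℝ) := by
    intro k
    simp only [ha]
    push_cast
    rw [div_sub_div_same]
    norm_num
  have hint : ∀ k : ℕ, IntervalIntegrable (fun t => Θ t t) MeasureTheory.volume (a k) (a (k+1)) :=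
    fun k => hH.intervalIntegrable _ _
  have hsplit : (∑ k ∈ Finset.range K, ∫ t in a k..a (k+1), Θ t t) = ∫ t in (0:ℝ)..1, Θ t t := by
    rw [intervalIntegral.sum_integral_adjacent_intervals (fun k _ => hint k)]
    have e0 : a 0 = 0 := by simp [ha]
    have e1 : a K = 1 := by simp only [ha]; exact div_self hKpos.ne'
    rw [e0, e1]
  have hconst : ∀ k : ℕ, (1/(K:ℝ)) * Θ (a k) (a (k+1))
      = ∫ t in a k..a (k+1), Θ (a k) (a (k+1)) := by
    intro k
    rw [intervalIntegral.integral_const, smul_eq_mul, hlen k]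
  have hbound : ∀ k ∈ Finset.range K,
      |(1/(K:ℝ)) * Θ (a k) (a (k+1)) - ∫ t in a k..a (k+1), Θ t t| ≤ ε/2 * (1/(K:ℝ)) := by
    intro k hk
    have hkK : k < K := Finset.mem_range.1 hk
    rw [hconst k, ← intervalIntegral.integral_sub (intervalIntegrable_const) (hint k)]
    have hb := intervalIntegral.norm_integral_le_of_norm_le_const
      (a := a k) (b := a (k+1)) (C := ε/2)
      (f := fun t => Θ (a k) (a (k+1)) - Θ t t) ?_
    · rw [Real.norm_eq_abs] at hb
      calc |∫ t in a k..a (k+1), (Θ (a k) (a (k+1)) - Θ t t)| ≤ ε/2 * |a (k+1) - a k| := hb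
        _ = ε/2 * (1/(K:ℝ)) := by rw [hlen k, abs_of_pos (by positivity)]
    · intro t ht
      rw [Set.uIoc_of_le (hmono k)] at ht
      have htI : t ∈ Set.Icc (0:ℝ) 1 := by
        constructor
        · exact le_trans (hamem k hkK.le).1 ht.1.le
        · exact le_trans ht.2 (hamem (k+1) hkK).2
      have hp : ((a k, a (k+1)) : ℝ × ℝ) ∈ Set.Icc (0:ℝ) 1 ×ˢ Set.Icc (0:ℝ) 1 :=
        ⟨hamem k hkK.le, hamem (k+1) hkK⟩
      have hq : ((t, t) : ℝ × ℝ) ∈ Set.Icc (0:ℝ) 1 ×ˢ Set.Icc (0:ℝ) 1 := ⟨htI, htI⟩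
      have hdist : dist ((a k, a (k+1)) : ℝ × ℝ) ((t, t) : ℝ × ℝ) < δ := by
        rw [Prod.dist_eq]
        apply max_lt
        · rw [Real.dist_eq, abs_of_nonpos (by linarith [ht.1.le])]
          have := hlen k
          linarith [ht.2]
        · rw [Real.dist_eq, abs_of_nonneg (by linarith [ht.2])]
          have := hlen k
          linarith [ht.1.le]
      have := hmod _ hp _ hq hdist
      rw [Real.dist_eq] at this
      rw [Real.norm_eq_abs]
      exact this.le
  have hfinal : dist (∑ k ∈ Finset.range K, (1/(K:ℝ)) * Θ (a k) (a (k+1)))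
      (∫ t in (0:ℝ)..1, Θ t t) < ε := by
    rw [Real.dist_eq, ← hsplit, ← Finset.sum_sub_distrib]
    calc |∑ k ∈ Finset.range K, ((1/(K:ℝ)) * Θ (a k) (a (k+1)) - ∫ t in a k..a (k+1), Θ t t)|
        ≤ ∑ k ∈ Finset.range K, |(1/(K:ℝ)) * Θ (a k) (a (k+1)) - ∫ t in a k..a (k+1), Θ t t| :=
          Finset.abs_sum_le_sum_abs _ _
      _ ≤ ∑ _k ∈ Finset.range K, ε/2 * (1/(K:ℝ)) := Finset.sum_le_sum hbound
      _ = ε/2 := by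
          rw [Finset.sum_const, Finset.card_range, nsmul_eq_mul]
          field_simp
      _ < ε := by linarith
  have hcongr : (∑ k ∈ Finset.range K, (1/(K:ℝ)) * Θ ((k:ℝ)/K) (((k:ℝ)+1)/K))
      = ∑ k ∈ Finset.range K, (1/(K:ℝ)) * Θ (a k) (a (k+1)) :=
    Finset.sum_congr rfl fun k _ => by simp only [ha]; push_cast; ring_nf
  rw [hcongr]
  exact hfinal

lemma pmfVar_const_mul {V : Type*} [Fintype V] (μ f : V → ℝ) (c : ℝ) :
    pmfVar μ (fun v => c * f v) = c ^ 2 * pmfVar μ f := by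
  unfold pmfVar
  rw [Finset.mul_sum]
  have h : ∑ w, μ w * (c * f w) = c * ∑ w, μ w * f w := by
    rw [Finset.mul_sum]; exact Finset.sum_congr rfl fun w _ => by ring
  rw [h]
  exact Finset.sum_congr rfl fun v _ => by ring

/-- Auxiliary: the (continuous) two-variable function whose diagonal Riemann sums
compute the scaled variance. -/
noncomputable def thetaFun {V : Type*} [Fintype V] (pstar : ℝ → V → ℝ) (β : ℝ → ℝ)
    (x y : ℝ) : ℝ :=
  hquot β x y ^ 2 *
    pmfVar (aisDist pstar (β (max 0 (min 1 x))))
      (fun v => hquot (fun b => Real.log (pstar b v)) (β (max 0 (min 1 x))) (β (max 0 (min 1 y))))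

/-- **Theorem 1 of the paper.** Under perfect transitions, for a smooth annealing
schedule `β_k = β(k/K)` the scaled variance of the log AIS weight,
`K · Σ_{k<K} Var_{μ_{β_k}}[log p*(β_{k+1}, ·) − log p*(β_k, ·)]`, converges as
`K → ∞` to the functional `J(β) = ∫₀¹ β′(t)² g(β(t)) dt`. -/
theorem ais_scaled_variance_tendsto_functional
    {V : Type*} [Fintype V] [Nonempty V] (pstar : ℝ → V → ℝ)
    (hpos : ∀ b ∈ Set.Icc (0 : ℝ) 1, ∀ v : V, 0 < pstar b v)
    (hsmooth : ∀ v : V,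
      ContDiffOn ℝ 2 (fun b => Real.log (pstar b v)) (Set.Icc 0 1))
    (β : ℝ → ℝ)
    (hβmap : ∀ t ∈ Set.Icc (0 : ℝ) 1, β t ∈ Set.Icc (0 : ℝ) 1)
    (hβ : ContDiffOn ℝ 2 β (Set.Icc 0 1)) :
    Tendsto
      (fun K : ℕ => (K : ℝ) * ∑ k ∈ Finset.range K,
        pmfVar (aisDist pstar (β ((k : ℝ) / K)))
          (fun v => Real.log (pstar (β (((k : ℝ) + 1) / K)) v)
            - Real.log (pstar (β ((k : ℝ) / K)) v)))
      atTop
      (𝓝 (∫ t in (0 : ℝ)..1, (deriv β t) ^ 2 * gfun pstar (β t))) := by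
  classical
  have hβcont : ContinuousOn β (Set.Icc 0 1) := hβ.continuousOn
  have hβr : Continuous fun x : ℝ => β (max 0 (min 1 x)) :=
    hβcont.comp_continuous continuous_clamp (fun x => clamp_mem x)
  have hβrmem : ∀ x : ℝ, β (max 0 (min 1 x)) ∈ Set.Icc (0:ℝ) 1 :=
    fun x => hβmap _ (clamp_mem x)
  -- continuity of pstar, Z, aisDist on [0,1]
  have hpcont : ∀ v : V, ContinuousOn (fun b => pstar b v) (Set.Icc 0 1) := by
    intro v
    have h1 : ContinuousOn (fun b => Real.exp (Real.log (pstar b v))) (Set.Icc 0 1) :=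
      Real.continuous_exp.comp_continuousOn (hsmooth v).continuousOn
    exact h1.congr fun b hb => (Real.exp_log (hpos b hb v)).symm
  have hZcont : ContinuousOn (Zf pstar) (Set.Icc 0 1) := by
    unfold Zf
    exact continuousOn_finset_sum _ fun v _ => hpcont v
  have hZpos : ∀ b ∈ Set.Icc (0:ℝ) 1, 0 < Zf pstar b := fun b hb =>
    Finset.sum_pos (fun v _ => hpos b hb v) Finset.univ_nonempty
  have hμcont : ∀ v : V, ContinuousOn (fun b => aisDist pstar b v) (Set.Icc 0 1) := by
    intro v
    exact (hpcont v).div hZcont fun b hb => (hZpos b hb).ne'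
  have hA : ∀ v : V, Continuous fun x : ℝ => aisDist pstar (β (max 0 (min 1 x))) v :=
    fun v => (hμcont v).comp_continuous hβr hβrmem
  have hHf : ∀ v : V, Continuous fun p : ℝ × ℝ =>
      hquot (fun b => Real.log (pstar b v)) (β (max 0 (min 1 p.1))) (β (max 0 (min 1 p.2))) := by
    intro v
    exact (hquot_continuous (hsmooth v)).comp
      ((hβr.comp continuous_fst).prodMk (hβr.comp continuous_snd))
  have hmean : Continuous fun p : ℝ × ℝ =>
      ∑ w, aisDist pstar (β (max 0 (min 1 p.1))) w *
        hquot (fun b => Real.log (pstar b w)) (β (max 0 (min 1 p.1))) (β (max 0 (min 1 p.2))) :=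
    continuous_finset_sum _ fun w _ => ((hA w).comp continuous_fst).mul (hHf w)
  have hΘ : Continuous fun p : ℝ × ℝ => thetaFun pstar β p.1 p.2 := by
    unfold thetaFun pmfVar
    apply Continuous.mul
    · exact (hquot_continuous hβ).pow 2
    · exact continuous_finset_sum _ fun v _ =>
        ((hA v).comp continuous_fst).mul (((hHf v).sub hmean).pow 2)
  -- diagonal values
  have hdiag : ∀ t ∈ Set.Ioo (0:ℝ) 1,
      thetaFun pstar β t t = (deriv β t) ^ 2 * gfun pstar (β t) := by
    intro t ht
    have htI : t ∈ Set.Icc (0:ℝ) 1 := Set.Ioo_subset_Icc_self ht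
    have hct : max 0 (min 1 t) = t := clamp_of_mem htI
    have h1 : hquot β t t = derivWithin β (Set.Icc 0 1) t := hquot_self β htI
    have h2 : derivWithin β (Set.Icc 0 1) t = deriv β t :=
      derivWithin_of_mem_nhds (Icc_mem_nhds ht.1 ht.2)
    have h3 : (fun v : V => hquot (fun b => Real.log (pstar b v)) (β t) (β t))
        = fun v => derivWithin (fun b => Real.log (pstar b v)) (Set.Icc 0 1) (β t) :=
      funext fun v => hquot_self _ (hβmap t htI)
    rw [thetaFun, hct, h1, h2, h3, gfun]
  -- rewrite the target integral
  have hintg : (∫ t in (0:ℝ)..1, (deriv β t) ^ 2 * gfun pstar (β t))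
      = ∫ t in (0:ℝ)..1, thetaFun pstar β t t := by
    apply intervalIntegral.integral_congr_ae
    have h1 : ∀ᵐ t : ℝ, t ≠ 1 := by
      rw [MeasureTheory.ae_iff]
      have he : {a : ℝ | ¬ a ≠ 1} = {1} := by ext x; simp
      rw [he]
      exact Real.volume_singleton
    filter_upwards [h1] with t ht1 htI
    rw [Set.uIoc_of_le (by norm_num : (0:ℝ) ≤ 1)] at htI
    have htO : t ∈ Set.Ioo (0:ℝ) 1 := ⟨htI.1, lt_of_le_of_ne htI.2 ht1⟩
    exact (hdiag t htO).symm
  rw [hintg]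
  -- identify the sums eventually
  have heq : ∀ᶠ K : ℕ in atTop,
      ((K : ℝ) * ∑ k ∈ Finset.range K,
        pmfVar (aisDist pstar (β ((k : ℝ) / K)))
          (fun v => Real.log (pstar (β (((k : ℝ) + 1) / K)) v)
            - Real.log (pstar (β ((k : ℝ) / K)) v)))
      = ∑ k ∈ Finset.range K, (1 / (K:ℝ)) * thetaFun pstar β ((k:ℝ)/K) (((k:ℝ)+1)/K) := by
    filter_upwards [eventually_ge_atTop 1] with K hK1
    have hKpos : (0:ℝ) < K := by exact_mod_cast hK1
    rw [Finset.mul_sum]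
    apply Finset.sum_congr rfl
    intro k hk
    have hkK : k < K := Finset.mem_range.1 hk
    have hx : (k:ℝ)/K ∈ Set.Icc (0:ℝ) 1 :=
      ⟨by positivity, by rw [div_le_one hKpos]; exact_mod_cast hkK.le⟩
    have hx' : ((k:ℝ)+1)/K ∈ Set.Icc (0:ℝ) 1 := by
      refine ⟨by positivity, ?_⟩
      rw [div_le_one hKpos]
      have : ((k+1 : ℕ) : ℝ) ≤ K := by exact_mod_cast hkK
      push_cast at this
      linarith
    have haI : β ((k:ℝ)/K) ∈ Set.Icc (0:ℝ) 1 := hβmap _ hx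
    have hbI : β (((k:ℝ)+1)/K) ∈ Set.Icc (0:ℝ) 1 := hβmap _ hx'
    have hfun : (fun v : V => Real.log (pstar (β (((k:ℝ)+1)/K)) v)
          - Real.log (pstar (β ((k:ℝ)/K)) v))
        = fun v => (β (((k:ℝ)+1)/K) - β ((k:ℝ)/K)) *
            hquot (fun t => Real.log (pstar t v)) (β ((k:ℝ)/K)) (β (((k:ℝ)+1)/K)) :=
      funext fun v => sub_eq_hquot (hsmooth v) haI hbI
    rw [hfun, pmfVar_const_mul]
    have hba : β (((k:ℝ)+1)/K) - β ((k:ℝ)/K)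
        = (1/(K:ℝ)) * hquot β ((k:ℝ)/K) (((k:ℝ)+1)/K) := by
      have h := sub_eq_hquot hβ hx hx'
      have hlen : ((k:ℝ)+1)/K - (k:ℝ)/K = 1/(K:ℝ) := by
        rw [div_sub_div_same]; norm_num
      rw [h, hlen]
    rw [hba]
    have hcx : max 0 (min 1 ((k:ℝ)/K)) = (k:ℝ)/K := clamp_of_mem hx
    have hcx' : max 0 (min 1 (((k:ℝ)+1)/K)) = ((k:ℝ)+1)/K := clamp_of_mem hx'
    rw [thetaFun, hcx, hcx']
    have hKne : (K:ℝ) ≠ 0 := hKpos.ne'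
    field_simp
  exact Tendsto.congr' (Filter.EventuallyEq.symm heq) (tendsto_riemann_diag _ hΘ)
end

section
/- Let V be a finite nonempty type, let p* : ℝ → V → ℝ be a family of unnormalized probabilities such that p*(β, v) > 0 for all β ∈ [0,1] and v ∈ V, and such that for each v the map β ↦ log p*(β, v) is twice continuously differentiable on [0,1]. Then there exists a constant C > 0 such that for all a, b with 0 ≤ a ≤ b ≤ 1, | Var_{μ_a}[ v ↦ log p*(b, v) − log p*(a, v) ] − (b − a)² · g(a) | ≤ C · (b − a)³. (This is the first-order Taylor approximation of the per-step variance used to derive Eq. (7) of the paper, with the covariance remainder of order (Δβ)³.) -/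
lemma pmfVar_smul {V : Type*} [Fintype V] (μ : V → ℝ) (c : ℝ) (h : V → ℝ) :
    pmfVar μ (fun v => c * h v) = c ^ 2 * pmfVar μ h := by
  unfold pmfVar
  rw [Finset.mul_sum]
  refine Finset.sum_congr rfl fun v _ => ?_
  have e : ∑ w, μ w * (c * h w) = c * ∑ w, μ w * h w := by
    rw [Finset.mul_sum]; exact Finset.sum_congr rfl fun w _ => by ring
  rw [e]; ring

lemma pmfVar_perturb {V : Type*} [Fintype V] (μ f g : V → ℝ)
    (hμ0 : ∀ v, 0 ≤ μ v) (hμ1 : ∑ v, μ v = 1)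
    {ε K : ℝ} (hε : 0 ≤ ε) (hK : 0 ≤ K)
    (hfg : ∀ v, |f v - g v| ≤ ε) (hg : ∀ v, |g v| ≤ K) :
    |pmfVar μ f - pmfVar μ g| ≤ 8 * K * ε + 4 * ε ^ 2 := by
  set mf := ∑ w, μ w * f w with hmf
  set mg := ∑ w, μ w * g w with hmg
  have hmean : |mf - mg| ≤ ε := by
    have : mf - mg = ∑ w, μ w * (f w - g w) := by
      rw [hmf, hmg, ← Finset.sum_sub_distrib]
      exact Finset.sum_congr rfl fun w _ => by ring
    rw [this]
    calc |∑ w, μ w * (f w - g w)| ≤ ∑ w, |μ w * (f w - g w)| :=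
          Finset.abs_sum_le_sum_abs _ _
      _ ≤ ∑ w, μ w * ε := by
          refine Finset.sum_le_sum fun w _ => ?_
          rw [abs_mul, abs_of_nonneg (hμ0 w)]
          exact mul_le_mul_of_nonneg_left (hfg w) (hμ0 w)
      _ = ε := by rw [← Finset.sum_mul, hμ1, one_mul]
  have hmgK : |mg| ≤ K := by
    calc |mg| ≤ ∑ w, |μ w * g w| := Finset.abs_sum_le_sum_abs _ _
      _ ≤ ∑ w, μ w * K := by
          refine Finset.sum_le_sum fun w _ => ?_
          rw [abs_mul, abs_of_nonneg (hμ0 w)]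
          exact mul_le_mul_of_nonneg_left (hg w) (hμ0 w)
      _ = K := by rw [← Finset.sum_mul, hμ1, one_mul]
  have key : ∀ v, |(f v - mf) ^ 2 - (g v - mg) ^ 2| ≤ 8 * K * ε + 4 * ε ^ 2 := by
    intro v
    have h1 : |(f v - mf) - (g v - mg)| ≤ 2 * ε := by
      have : (f v - mf) - (g v - mg) = (f v - g v) - (mf - mg) := by ring
      rw [this]
      calc |(f v - g v) - (mf - mg)| ≤ |f v - g v| + |mf - mg| := abs_sub _ _
        _ ≤ ε + ε := add_le_add (hfg v) hmean
        _ = 2 * ε := by ring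
    have hgm : |g v - mg| ≤ 2 * K := by
      calc |g v - mg| ≤ |g v| + |mg| := abs_sub _ _
        _ ≤ K + K := add_le_add (hg v) hmgK
        _ = 2 * K := by ring
    have h2 : |(f v - mf) + (g v - mg)| ≤ 4 * K + 2 * ε := by
      have : (f v - mf) + (g v - mg) = ((f v - mf) - (g v - mg)) + 2 * (g v - mg) := by
        ring
      rw [this]
      calc |((f v - mf) - (g v - mg)) + 2 * (g v - mg)|
          ≤ |(f v - mf) - (g v - mg)| + |2 * (g v - mg)| := abs_add_le _ _
        _ ≤ 2 * ε + 2 * (2 * K) := by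
            refine add_le_add h1 ?_
            rw [abs_mul]
            simp only [abs_two]
            exact mul_le_mul_of_nonneg_left hgm (by norm_num)
        _ = 4 * K + 2 * ε := by ring
    have : (f v - mf) ^ 2 - (g v - mg) ^ 2 =
        ((f v - mf) - (g v - mg)) * ((f v - mf) + (g v - mg)) := by ring
    rw [this, abs_mul]
    calc |(f v - mf) - (g v - mg)| * |(f v - mf) + (g v - mg)|
        ≤ (2 * ε) * (4 * K + 2 * ε) :=
          mul_le_mul h1 h2 (abs_nonneg _) (by positivity)
      _ = 8 * K * ε + 4 * ε ^ 2 := by ring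
  have : pmfVar μ f - pmfVar μ g =
      ∑ v, μ v * ((f v - mf) ^ 2 - (g v - mg) ^ 2) := by
    unfold pmfVar
    rw [← Finset.sum_sub_distrib]
    exact Finset.sum_congr rfl fun v _ => by ring
  rw [this]
  calc |∑ v, μ v * ((f v - mf) ^ 2 - (g v - mg) ^ 2)|
      ≤ ∑ v, |μ v * ((f v - mf) ^ 2 - (g v - mg) ^ 2)| := Finset.abs_sum_le_sum_abs _ _
    _ ≤ ∑ v, μ v * (8 * K * ε + 4 * ε ^ 2) := by
        refine Finset.sum_le_sum fun v _ => ?_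
        rw [abs_mul, abs_of_nonneg (hμ0 v)]
        exact mul_le_mul_of_nonneg_left (key v) (hμ0 v)
    _ = 8 * K * ε + 4 * ε ^ 2 := by rw [← Finset.sum_mul, hμ1, one_mul]

/-- First-order Taylor approximation of the per-step variance (Eq. (7) of the
paper): there is `C > 0` such that for all `0 ≤ a ≤ b ≤ 1`,
`|Var_{μ_a}[log p*(b, ·) − log p*(a, ·)] − (b − a)² g(a)| ≤ C (b − a)³`. -/
theorem per_step_variance_taylor
    {V : Type*} [Fintype V] [Nonempty V] (pstar : ℝ → V → ℝ)
    (hpos : ∀ b ∈ Set.Icc (0 : ℝ) 1, ∀ v : V, 0 < pstar b v)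
    (hsmooth : ∀ v : V,
      ContDiffOn ℝ 2 (fun b => Real.log (pstar b v)) (Set.Icc 0 1)) :
    ∃ C > 0, ∀ a b : ℝ, 0 ≤ a → a ≤ b → b ≤ 1 →
      |pmfVar (aisDist pstar a)
          (fun v => Real.log (pstar b v) - Real.log (pstar a v))
        - (b - a) ^ 2 * gfun pstar a| ≤ C * (b - a) ^ 3 := by
  classical
  set L : V → ℝ → ℝ := fun v b => Real.log (pstar b v) with hL
  have hUD : UniqueDiffOn ℝ (Set.Icc (0:ℝ) 1) := uniqueDiffOn_Icc (by norm_num)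
  -- continuity of first and second derivatives
  have hcont1 : ∀ v, ContinuousOn (derivWithin (L v) (Set.Icc 0 1)) (Set.Icc 0 1) :=
    fun v => (hsmooth v).continuousOn_derivWithin hUD (by norm_num)
  have hcont2 : ∀ v,
      ContinuousOn (iteratedDerivWithin 2 (L v) (Set.Icc 0 1)) (Set.Icc 0 1) :=
    fun v => (hsmooth v).continuousOn_iteratedDerivWithin (by norm_num) hUD
  -- bounds
  have hb1 : ∀ v, ∃ B, ∀ y ∈ Set.Icc (0:ℝ) 1, |derivWithin (L v) (Set.Icc 0 1) y| ≤ B := by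
    intro v
    obtain ⟨B, hB⟩ := isCompact_Icc.exists_bound_of_continuousOn (hcont1 v)
    exact ⟨B, fun y hy => hB y hy⟩
  have hb2 : ∀ v, ∃ B, ∀ y ∈ Set.Icc (0:ℝ) 1,
      |iteratedDerivWithin 2 (L v) (Set.Icc 0 1) y| ≤ B := by
    intro v
    obtain ⟨B, hB⟩ := isCompact_Icc.exists_bound_of_continuousOn (hcont2 v)
    exact ⟨B, fun y hy => hB y hy⟩
  choose B1 hB1 using hb1
  choose B2 hB2 using hb2
  set M1 : ℝ := ∑ v, |B1 v| with hM1
  set M2 : ℝ := ∑ v, |B2 v| with hM2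
  have hM1nn : 0 ≤ M1 := Finset.sum_nonneg fun v _ => abs_nonneg _
  have hM2nn : 0 ≤ M2 := Finset.sum_nonneg fun v _ => abs_nonneg _
  have hM1le : ∀ v, ∀ y ∈ Set.Icc (0:ℝ) 1, |derivWithin (L v) (Set.Icc 0 1) y| ≤ M1 := by
    intro v y hy
    refine (hB1 v y hy).trans ((le_abs_self _).trans ?_)
    exact Finset.single_le_sum (fun w _ => abs_nonneg (B1 w)) (Finset.mem_univ v)
  have hM2le : ∀ v, ∀ y ∈ Set.Icc (0:ℝ) 1,
      |iteratedDerivWithin 2 (L v) (Set.Icc 0 1) y| ≤ M2 := by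
    intro v y hy
    refine (hB2 v y hy).trans ((le_abs_self _).trans ?_)
    exact Finset.single_le_sum (fun w _ => abs_nonneg (B2 w)) (Finset.mem_univ v)
  refine ⟨8 * M1 * M2 + 4 * M2 ^ 2 + 1, by positivity, ?_⟩
  intro a b ha hab hb1'
  rcases eq_or_lt_of_le hab with rfl | hlt
  · simp [pmfVar]
  -- now a < b
  have haI : a ∈ Set.Icc (0:ℝ) 1 := ⟨ha, hab.trans hb1'⟩
  have hsub : Set.Icc a b ⊆ Set.Icc (0:ℝ) 1 := Set.Icc_subset_Icc ha hb1'
  have hUDab : UniqueDiffOn ℝ (Set.Icc a b) := uniqueDiffOn_Icc hlt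
  -- the measure is a pmf
  have hZpos : 0 < Zf pstar a :=
    Finset.sum_pos (fun v _ => hpos a haI v) Finset.univ_nonempty
  have hμ0 : ∀ v, 0 ≤ aisDist pstar a v :=
    fun v => le_of_lt (div_pos (hpos a haI v) hZpos)
  have hμ1 : ∑ v, aisDist pstar a v = 1 := by
    unfold aisDist
    rw [← Finset.sum_div]
    exact div_self (ne_of_gt hZpos)
  -- first derivatives agree on the smaller interval
  have hderiv_eq : ∀ v, ∀ y ∈ Set.Icc a b,
      derivWithin (L v) (Set.Icc a b) y = derivWithin (L v) (Set.Icc 0 1) y := by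
    intro v y hy
    exact derivWithin_subset hsub (hUDab y hy)
      (((hsmooth v).differentiableOn (by norm_num)) y (hsub hy))
  have hd1 : ∀ v, DifferentiableOn ℝ (derivWithin (L v) (Set.Icc 0 1)) (Set.Icc 0 1) :=
    fun v => ((hsmooth v).derivWithin (m := 1) hUD (by norm_num)).differentiableOn one_ne_zero
  -- second derivatives agree on the smaller interval
  have hiter_eq : ∀ v, ∀ y ∈ Set.Icc a b,
      iteratedDerivWithin 2 (L v) (Set.Icc a b) y
        = iteratedDerivWithin 2 (L v) (Set.Icc 0 1) y := by
    intro v y hy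
    have e1 : Set.EqOn (iteratedDerivWithin 1 (L v) (Set.Icc a b))
        (derivWithin (L v) (Set.Icc 0 1)) (Set.Icc a b) := fun z hz =>
      (congrFun iteratedDerivWithin_one z).trans (hderiv_eq v z hz)
    have e2 : Set.EqOn (iteratedDerivWithin 1 (L v) (Set.Icc 0 1))
        (derivWithin (L v) (Set.Icc 0 1)) (Set.Icc 0 1) := fun z hz =>
      congrFun iteratedDerivWithin_one z
    rw [iteratedDerivWithin_succ (n := 1) (s := Set.Icc a b), iteratedDerivWithin_succ (n := 1) (s := Set.Icc 0 1),
      derivWithin_congr e1 (e1 hy), derivWithin_congr e2 (e2 (hsub hy))]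
    exact derivWithin_subset hsub (hUDab y hy) (hd1 v y (hsub hy))
  -- Taylor bound
  have htaylor : ∀ v,
      |(L v b - L v a) - (b - a) * derivWithin (L v) (Set.Icc 0 1) a|
        ≤ M2 * (b - a) ^ 2 := by
    intro v
    have hC : ∀ y ∈ Set.Icc a b,
        ‖iteratedDerivWithin 2 (L v) (Set.Icc a b) y‖ ≤ M2 := by
      intro y hy
      rw [Real.norm_eq_abs, hiter_eq v y hy]
      exact hM2le v y (hsub hy)
    have := taylor_mean_remainder_bound (n := 1) hab ((hsmooth v).mono hsub)
      (Set.right_mem_Icc.2 hab) hC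
    rw [taylor_within_apply] at this
    simp only [Finset.sum_range_succ, Finset.sum_range_zero, zero_add,
      Nat.factorial, pow_zero, pow_one, iteratedDerivWithin_zero, smul_eq_mul,
      Nat.succ_eq_add_one, mul_one, Nat.cast_one, inv_one, one_mul] at this
    rw [iteratedDerivWithin_one,
      hderiv_eq v a (Set.left_mem_Icc.2 hab)] at this
    rw [Real.norm_eq_abs] at this
    calc |(L v b - L v a) - (b - a) * derivWithin (L v) (Set.Icc 0 1) a|
        = |L v b - (L v a + (b - a) * derivWithin (L v) (Set.Icc 0 1) a)| := by
          ring_nf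
      _ ≤ M2 * (b - a) ^ 2 := by
          refine le_trans (le_of_eq (by simp only [hL])) (this.trans (le_of_eq ?_))
          norm_num
  -- bound on the linear term
  have hg0 : ∀ v, |(b - a) * derivWithin (L v) (Set.Icc 0 1) a| ≤ M1 * (b - a) := by
    intro v
    rw [abs_mul, abs_of_nonneg (sub_nonneg.2 hab), mul_comm]
    exact mul_le_mul_of_nonneg_right (hM1le v a haI) (sub_nonneg.2 hab)
  -- apply the perturbation lemma
  have hpert := pmfVar_perturb (aisDist pstar a)
      (fun v => L v b - L v a)
      (fun v => (b - a) * derivWithin (L v) (Set.Icc 0 1) a)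
      hμ0 hμ1 (ε := M2 * (b - a) ^ 2) (K := M1 * (b - a))
      (by positivity) (by nlinarith [sub_nonneg.2 hab])
      htaylor hg0
  have hsmul : pmfVar (aisDist pstar a)
      (fun v => (b - a) * derivWithin (L v) (Set.Icc 0 1) a)
      = (b - a) ^ 2 * gfun pstar a := by
    rw [gfun]
    exact pmfVar_smul _ _ _
  rw [hsmul] at hpert
  -- conclude
  have ht0 : (0:ℝ) ≤ b - a := sub_nonneg.2 hab
  have ht1 : b - a ≤ 1 := by linarith [hb1', ha]
  refine hpert.trans ?_
  nlinarith [pow_nonneg ht0 3, pow_nonneg ht0 2, pow_nonneg ht0 4,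
    mul_nonneg hM1nn hM2nn, sq_nonneg M2,
    mul_le_of_le_one_right (pow_nonneg ht0 3) ht1,
    mul_nonneg (mul_nonneg hM1nn hM2nn) (pow_nonneg ht0 3),
    mul_nonneg (sq_nonneg M2) (pow_nonneg ht0 3)]
end

section
/- Let V be a finite nonempty type, let p* : ℝ → V → ℝ satisfy p*(β, v) > 0 for all β ∈ [0,1] and v ∈ V, and let 0 = β_0 < β_1 < … < β_K = 1 be a schedule. Let v_0, v_1, …, v_{K−1} be independent V-valued random variables with v_k distributed according to μ_{β_k}. Then the expectation of the AIS importance weight w = Π_{k=0}^{K−1} p*(β_{k+1}, v_k) / p*(β_k, v_k) equals Z(1)/Z(0). In particular, Z(0) · E[w] is an unbiased estimate of the partition function Z(1). (This is the unbiasedness property of AIS under perfect transitions, which the paper relies on throughout.) -/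
open MeasureTheory ProbabilityTheory

/-- **Unbiasedness of AIS under perfect transitions.** With independent
intermediate samples `v_k ∼ μ_{β_k}`, the AIS importance weight
`w = Π_{k<K} p*(β_{k+1}, v_k) / p*(β_k, v_k)` satisfies `E[w] = Z(1)/Z(0)`;
in particular `Z(0) · E[w]` is an unbiased estimate of `Z(1)`. -/
theorem ais_weight_unbiased
    {V : Type*} [Fintype V] [Nonempty V]
    [MeasurableSpace V] [MeasurableSingletonClass V]
    (pstar : ℝ → V → ℝ)
    (hpos : ∀ b ∈ Set.Icc (0 : ℝ) 1, ∀ v : V, 0 < pstar b v)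
    (K : ℕ) (hK : 0 < K)
    (β : ℕ → ℝ) (hβ0 : β 0 = 0) (hβK : β K = 1)
    (hmono : ∀ k < K, β k < β (k + 1))
    {Ω : Type*} [MeasurableSpace Ω] (P : Measure Ω) [IsProbabilityMeasure P]
    (X : Fin K → Ω → V)
    (hmeas : ∀ k : Fin K, Measurable (X k))
    (hindep : iIndepFun X P)
    (hdist : ∀ k : Fin K, ∀ v0 : V,
      P {ω | X k ω = v0} = ENNReal.ofReal (aisDist pstar (β k) v0)) :
    (∫ ω, (∏ k : Fin K,
        pstar (β ((k : ℕ) + 1)) (X k ω) / pstar (β (k : ℕ)) (X k ω)) ∂P)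
      = Zf pstar 1 / Zf pstar 0
    ∧ Zf pstar 0 * (∫ ω, (∏ k : Fin K,
        pstar (β ((k : ℕ) + 1)) (X k ω) / pstar (β (k : ℕ)) (X k ω)) ∂P)
      = Zf pstar 1 := by
  -- the per-step weight functions
  set g : Fin K → V → ℝ := fun k v => pstar (β ((k : ℕ) + 1)) v / pstar (β (k : ℕ)) v with hg
  set Y : Fin K → Ω → ℝ := fun k ω => g k (X k ω) with hY
  -- β is in `[0,1]` on `{0,…,K}`
  have hmono' : ∀ i j : ℕ, i ≤ j → j ≤ K → β i ≤ β j := by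
    intro i j hij
    induction j, hij using Nat.le_induction with
    | base => intro _; exact le_rfl
    | succ n hin ih =>
      intro hnK
      exact le_trans (ih (le_of_lt (Nat.lt_of_succ_le hnK)))
        (le_of_lt (hmono n (Nat.lt_of_succ_le hnK)))
  have hIcc : ∀ k ≤ K, β k ∈ Set.Icc (0 : ℝ) 1 := by
    intro k hk
    constructor
    · rw [← hβ0]; exact hmono' 0 k (Nat.zero_le _) hk
    · rw [← hβK]; exact hmono' k K hk le_rfl
  have hZpos : ∀ b ∈ Set.Icc (0 : ℝ) 1, 0 < Zf pstar b := by
    intro b hb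
    exact Finset.sum_pos (fun v _ => hpos b hb v) Finset.univ_nonempty
  -- measurability / integrability of the Y's
  have hYmeas : ∀ k : Fin K, Measurable (Y k) :=
    fun k => (measurable_of_countable (g k)).comp (hmeas k)
  have hYint : ∀ k : Fin K, Integrable (Y k) P := by
    intro k
    obtain ⟨C, hC⟩ := Finite.exists_le fun v => ‖g k v‖
    exact Integrable.mono' (integrable_const C) (hYmeas k).aestronglyMeasurable
      (Filter.Eventually.of_forall fun ω => hC (X k ω))
  -- independence of the Y's
  have hYindep : iIndepFun Y P :=
    hindep.comp g fun k => measurable_of_countable (g k)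
  -- expectation factorizes over independent variables
  have key : ∀ s : Finset (Fin K),
      Integrable (∏ k ∈ s, Y k) P ∧
      (∫ ω, (∏ k ∈ s, Y k) ω ∂P) = ∏ k ∈ s, ∫ ω, Y k ω ∂P := by
    intro s
    induction s using Finset.cons_induction with
    | empty => exact ⟨by rw [Finset.prod_empty]; exact integrable_const (1:ℝ), by simp⟩
    | cons i s his ih =>
      have hind : IndepFun (∏ j ∈ s, Y j) (Y i) P :=
        hYindep.indepFun_finsetProd_of_notMem hYmeas his
      have hprod : (∏ k ∈ Finset.cons i s his, Y k) = (∏ j ∈ s, Y j) * Y i := by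
        rw [Finset.prod_cons, mul_comm]
      constructor
      · rw [hprod]
        exact hind.integrable_mul ih.1 (hYint i)
      · rw [hprod, hind.integral_mul_eq_mul_integral ih.1.aestronglyMeasurable (hYint i).aestronglyMeasurable, ih.2,
          Finset.prod_cons, mul_comm]
  -- per-coordinate expectation
  have hEk : ∀ k : Fin K, (∫ ω, Y k ω ∂P)
      = Zf pstar (β ((k : ℕ) + 1)) / Zf pstar (β (k : ℕ)) := by
    intro k
    have hkK : (k : ℕ) ≤ K := le_of_lt k.is_lt
    have hk1K : (k : ℕ) + 1 ≤ K := k.is_lt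
    have hZk := hZpos _ (hIcc _ hkK)
    have h1 : (∫ ω, Y k ω ∂P) = ∫ v, g k v ∂(P.map (X k)) :=
      (integral_map (hmeas k).aemeasurable
        (measurable_of_countable (g k)).aestronglyMeasurable).symm
    rw [h1, integral_fintype Integrable.of_finite]
    have hmap : ∀ v : V, (P.map (X k)) {v} = ENNReal.ofReal (aisDist pstar (β (k : ℕ)) v) := by
      intro v
      rw [Measure.map_apply (hmeas k) (measurableSet_singleton v)]
      have : X k ⁻¹' {v} = {ω | X k ω = v} := rfl
      rw [this, hdist k v]
    have hsum : ∀ v : V, (P.map (X k)).real {v} • g k v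
        = pstar (β ((k : ℕ) + 1)) v / Zf pstar (β (k : ℕ)) := by
      intro v
      rw [Measure.real, hmap v]
      simp only [aisDist, smul_eq_mul, hg]
      rw [ENNReal.toReal_ofReal (div_nonneg (hpos _ (hIcc _ hkK) v).le hZk.le)]
      have hpk : pstar (β (k : ℕ)) v ≠ 0 := (hpos _ (hIcc _ hkK) v).ne'
      field_simp
    rw [Finset.sum_congr rfl fun v _ => hsum v, ← Finset.sum_div]
    rfl
  -- telescoping product
  have htel : ∀ n ≤ K, (∏ k ∈ Finset.range n, Zf pstar (β (k + 1)) / Zf pstar (β k))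
      = Zf pstar (β n) / Zf pstar (β 0) := by
    intro n hn
    induction n with
    | zero => simp [div_self (hZpos _ (hIcc 0 (Nat.zero_le _))).ne']
    | succ m ih =>
      have hmK : m ≤ K := le_of_lt (Nat.lt_of_succ_le hn)
      rw [Finset.prod_range_succ, ih hmK]
      have h0 := (hZpos _ (hIcc 0 (Nat.zero_le _))).ne'
      have hm := (hZpos _ (hIcc m hmK)).ne'
      field_simp
    -- main computation
  have hmain : (∫ ω, (∏ k : Fin K,
        pstar (β ((k : ℕ) + 1)) (X k ω) / pstar (β (k : ℕ)) (X k ω)) ∂P)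
      = Zf pstar 1 / Zf pstar 0 := by
    have : (∫ ω, (∏ k : Fin K,
        pstar (β ((k : ℕ) + 1)) (X k ω) / pstar (β (k : ℕ)) (X k ω)) ∂P)
        = ∫ ω, (∏ k ∈ (Finset.univ : Finset (Fin K)), Y k) ω ∂P := by
      congr 1; funext ω; exact (Finset.prod_apply ω Finset.univ Y).symm
    rw [this, (key Finset.univ).2]
    have : (∏ k ∈ (Finset.univ : Finset (Fin K)), ∫ ω, Y k ω ∂P)
        = ∏ k ∈ Finset.range K, Zf pstar (β (k + 1)) / Zf pstar (β k) := by
      rw [Finset.prod_congr rfl fun k _ => hEk k]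
      exact Fin.prod_univ_eq_prod_range (fun n => Zf pstar (β (n + 1)) / Zf pstar (β n)) K
    rw [this, htel K le_rfl, hβK, hβ0]
  refine ⟨hmain, ?_⟩
  rw [hmain]
  have h0 := (hZpos 0 ⟨le_rfl, zero_le_one⟩).ne'
  field_simp
end
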